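/- Let H and V be real Hilbert spaces and let ι : V → H be a continuous injective linear map. Then for every η⁰ ∈ V, v⁰ ∈ H and Δt > 0 there exists a unique pair (η½, v½) ∈ V × V such that η½ = η⁰ + Δt · v½ and ⟨ι v½ − v⁰, ι ψ⟩_H + Δt · ⟨η½, ψ⟩_V = 0 for all ψ ∈ V. -/

import Mathlib

open RealInnerProductSpace

/-- Existence and uniqueness for the time-discretized
structure sub-problem: in Hilbert spaces `H`, `V` with a continuous injective
linear map `ι : V → H`, for any data `η⁰ ∈ V`, `v⁰ ∈ H` and `Δt > 0` there is
a unique pair `(η½, v½) ∈ V × V` with `η½ = η⁰ + Δt • v½` and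
`⟪ι v½ - v⁰, ι ψ⟫_H + Δt ⟪η½, ψ⟫_V = 0` for all `ψ ∈ V`. -/
theorem stmt6 {H V : Type*}
    [NormedAddCommGroup H] [InnerProductSpace ℝ H] [CompleteSpace H]
    [NormedAddCommGroup V] [InnerProductSpace ℝ V] [CompleteSpace V]
    (ι : V →L[ℝ] H) (hι : Function.Injective ι)
    (η₀ : V) (v₀ : H) (Δt : ℝ) (hΔt : 0 < Δt) :
    ∃! p : V × V, p.1 = η₀ + Δt • p.2 ∧
      ∀ ψ : V, ⟪ι p.2 - v₀, ι ψ⟫ + Δt * ⟪p.1, ψ⟫ = 0 := by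
  classical
  -- the operator `T = ι* ι + Δt² I` and the associated bilinear form
  set T : V →L[ℝ] V :=
    (ContinuousLinearMap.adjoint ι).comp ι + (Δt ^ 2) • ContinuousLinearMap.id ℝ V with hT
  set B : V →L[ℝ] V →L[ℝ] ℝ := (innerSL ℝ).comp T with hBdef
  have hB : ∀ v ψ : V, B v ψ = ⟪ι v, ι ψ⟫ + Δt ^ 2 * ⟪v, ψ⟫ := by
    intro v ψ
    simp [hBdef, hT, ContinuousLinearMap.add_apply, ContinuousLinearMap.smul_apply,
      inner_add_left, real_inner_smul_left, ContinuousLinearMap.adjoint_inner_left,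
      innerSL_apply_apply]
    exact Or.inl rfl
  have coercive : IsCoercive B := by
    refine ⟨Δt ^ 2, by positivity, fun u => ?_⟩
    rw [hB]
    have h1 : (0 : ℝ) ≤ ⟪ι u, ι u⟫ := real_inner_self_nonneg
    have h2 : ⟪u, u⟫ = ‖u‖ * ‖u‖ := real_inner_self_eq_norm_mul_norm u
    nlinarith
  set E := coercive.continuousLinearEquivOfBilin with hE
  set f : V := ContinuousLinearMap.adjoint ι v₀ - Δt • η₀ with hf
  have hfψ : ∀ ψ : V, ⟪f, ψ⟫ = ⟪v₀, ι ψ⟫ - Δt * ⟪η₀, ψ⟫ := by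
    intro ψ
    simp [hf, inner_sub_left, real_inner_smul_left, ContinuousLinearMap.adjoint_inner_left]
  -- the key equivalence: the variational equation for `v` says `E v = f`
  have key : ∀ v : V,
      ((∀ ψ : V, ⟪ι v - v₀, ι ψ⟫ + Δt * ⟪η₀ + Δt • v, ψ⟫ = 0) ↔ E v = f) := by
    intro v
    have expand : ∀ ψ : V,
        ⟪ι v - v₀, ι ψ⟫ + Δt * ⟪η₀ + Δt • v, ψ⟫ = B v ψ - ⟪f, ψ⟫ := by
      intro ψ
      rw [hB, hfψ, inner_sub_left, inner_add_left, real_inner_smul_left]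
      ring
    constructor
    · intro h
      have huniq : ∀ w : V, ⟪f, w⟫ = B v w := by
        intro w
        have := h w
        rw [expand w] at this
        linarith
      exact (coercive.unique_continuousLinearEquivOfBilin huniq).symm
    · intro h ψ
      rw [expand ψ, ← h, coercive.continuousLinearEquivOfBilin_apply]
      ring
  refine ⟨(η₀ + Δt • E.symm f, E.symm f), ⟨rfl, ?_⟩, ?_⟩
  · exact (key (E.symm f)).mpr (E.apply_symm_apply f)
  · rintro ⟨η, v⟩ ⟨hη, h⟩
    simp only at hη h
    have h' : ∀ ψ : V, ⟪ι v - v₀, ι ψ⟫ + Δt * ⟪η₀ + Δt • v, ψ⟫ = 0 := by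
      intro ψ; simpa [hη] using h ψ
    have hv : v = E.symm f := by
      have := (key v).mp h'
      rw [← this, ContinuousLinearEquiv.symm_apply_apply]
    exact Prod.ext (by simp [hη, hv]) hv
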